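/- Let T be a set and Q : T × T → ℂ. For π ∈ S_n and t = (t_1,…,t_n) ∈ T^n define Q_π(t) := ∏_{1 ≤ i < j ≤ n, π(i) > π(j)} Q(t_i, t_j). If ρ = π_l ∘ η is a reduced expression (i.e., |ρ| = |η| + 1, where |·| denotes the number of inversions and π_l = (l, l+1)), then Q_ρ(t) = Q(t_{η^{-1}(l)}, t_{η^{-1}(l+1)}) · Q_η(t) for all t ∈ T^n. -/

import Mathlib

/-- `Q_π(t) = ∏_{i<j, π(i)>π(j)} Q(t_i, t_j)`. -/
def Qprod {T : Type*} (n : ℕ) (Q : T → T → ℂ) (π : Equiv.Perm (Fin n)) (t : Fin n → T) : ℂ :=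
  ∏ p ∈ Finset.univ.filter (fun p : Fin n × Fin n => p.1 < p.2 ∧ π p.2 < π p.1),
    Q (t p.1) (t p.2)

/-- The number of inversions of a permutation of `Fin n`. -/
def invCount {n : ℕ} (π : Equiv.Perm (Fin n)) : ℕ :=
  (Finset.univ.filter (fun p : Fin n × Fin n => p.1 < p.2 ∧ π p.2 < π p.1)).card

/-- The adjacent transposition `(l, l+1)` in `S_{n+1}`. -/
def adjSwap (n : ℕ) (l : Fin n) : Equiv.Perm (Fin (n + 1)) :=
  Equiv.swap l.castSucc l.succ

lemma swap_lt_iff {n : ℕ} (l : Fin n) (x y : Fin (n+1))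
    (h1 : ¬(x = l.castSucc ∧ y = l.succ)) (h2 : ¬(x = l.succ ∧ y = l.castSucc)) :
    Equiv.swap l.castSucc l.succ y < Equiv.swap l.castSucc l.succ x ↔ y < x := by
  rw [Equiv.swap_apply_def, Equiv.swap_apply_def]
  have hc : (l.castSucc : Fin (n+1)).val = l.val := rfl
  have hd : (l.succ : Fin (n+1)).val = l.val + 1 := rfl
  split_ifs <;> [skip; skip; skip; skip; skip; skip; skip; skip; skip] <;>
    simp only [Fin.lt_def, Fin.ext_iff, not_and] at * <;> omega

lemma key {n : ℕ} (l : Fin n) (π : Equiv.Perm (Fin (n+1)))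
    (h : π⁻¹ l.castSucc < π⁻¹ l.succ) :
    (Finset.univ.filter (fun p : Fin (n+1) × Fin (n+1) =>
        p.1 < p.2 ∧ (adjSwap n l * π) p.2 < (adjSwap n l * π) p.1))
    = insert (π⁻¹ l.castSucc, π⁻¹ l.succ)
        (Finset.univ.filter (fun p : Fin (n+1) × Fin (n+1) => p.1 < p.2 ∧ π p.2 < π p.1)) := by
  ext p
  simp only [Finset.mem_filter, Finset.mem_univ, true_and, Finset.mem_insert]
  simp only [Equiv.Perm.mul_apply, adjSwap]
  by_cases hp : p = (π⁻¹ l.castSucc, π⁻¹ l.succ)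
  · subst hp
    simp only [Equiv.Perm.coe_inv, Equiv.apply_symm_apply, Equiv.swap_apply_left, Equiv.swap_apply_right]
    constructor
    · intro _; left; trivial
    · intro _
      exact ⟨h, Fin.castSucc_lt_succ (i := l)⟩
  · have h1 : ¬(π p.1 = l.castSucc ∧ π p.2 = l.succ) := by
      rintro ⟨ha, hb⟩
      apply hp
      ext
      · rw [show p.1 = π⁻¹ l.castSucc by rw [← ha, Equiv.Perm.coe_inv, Equiv.symm_apply_apply]]
      · rw [show p.2 = π⁻¹ l.succ by rw [← hb, Equiv.Perm.coe_inv, Equiv.symm_apply_apply]]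
    constructor
    · rintro ⟨hlt, hsw⟩
      by_cases h2 : π p.1 = l.succ ∧ π p.2 = l.castSucc
      · -- then p = (π⁻¹ succ, π⁻¹ castSucc), but then p.2 < p.1 by h, contradiction with hlt
        exfalso
        have e1 : p.1 = π⁻¹ l.succ := by rw [← h2.1, Equiv.Perm.coe_inv, Equiv.symm_apply_apply]
        have e2 : p.2 = π⁻¹ l.castSucc := by rw [← h2.2, Equiv.Perm.coe_inv, Equiv.symm_apply_apply]
        rw [e1, e2] at hlt
        exact absurd hlt (not_lt.2 h.le)
      · right
        exact ⟨hlt, (swap_lt_iff l _ _ h1 h2).1 hsw⟩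
    · rintro (heq | ⟨hlt, hinv⟩)
      · exact absurd heq hp
      · have h2 : ¬(π p.1 = l.succ ∧ π p.2 = l.castSucc) := by
          rintro ⟨ha, hb⟩
          have e1 : p.1 = π⁻¹ l.succ := by rw [← ha, Equiv.Perm.coe_inv, Equiv.symm_apply_apply]
          have e2 : p.2 = π⁻¹ l.castSucc := by rw [← hb, Equiv.Perm.coe_inv, Equiv.symm_apply_apply]
          rw [e1, e2] at hlt
          exact absurd hlt (not_lt.2 h.le)
        exact ⟨hlt, (swap_lt_iff l _ _ h1 h2).2 hinv⟩

lemma key_notin {n : ℕ} (l : Fin n) (π : Equiv.Perm (Fin (n+1))) :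
    (π⁻¹ l.castSucc, π⁻¹ l.succ) ∉
      Finset.univ.filter (fun p : Fin (n+1) × Fin (n+1) => p.1 < p.2 ∧ π p.2 < π p.1) := by
  simp only [Finset.mem_filter, Finset.mem_univ, true_and, Equiv.Perm.coe_inv, Equiv.apply_symm_apply, not_and]
  intro _
  exact not_lt.2 (Fin.castSucc_lt_succ (i := l)).le

theorem Qprod_reduced {T : Type*} {n : ℕ} (Q : T → T → ℂ) (l : Fin n)
    (η ρ : Equiv.Perm (Fin (n + 1))) (hρ : ρ = adjSwap n l * η)
    (hred : invCount ρ = invCount η + 1) (t : Fin (n + 1) → T) :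
    Qprod (n + 1) Q ρ t =
      Q (t (η⁻¹ l.castSucc)) (t (η⁻¹ l.succ)) * Qprod (n + 1) Q η t := by
  subst hρ
  by_cases hab : η⁻¹ l.castSucc < η⁻¹ l.succ
  · unfold Qprod
    rw [key l η hab, Finset.prod_insert (key_notin l η)]
  · exfalso
    have hne : η⁻¹ l.castSucc ≠ η⁻¹ l.succ := by
      intro h
      have := η⁻¹.injective h
      exact absurd this (Fin.castSucc_lt_succ (i := l)).ne
    have hba : η⁻¹ l.succ < η⁻¹ l.castSucc := lt_of_le_of_ne (not_lt.1 hab) (Ne.symm hne)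
    set ρ := adjSwap n l * η with hρdef
    have hss : adjSwap n l * ρ = η := by
      rw [hρdef, ← mul_assoc, adjSwap, Equiv.swap_mul_self, one_mul]
    have hinv1 : ρ⁻¹ l.castSucc = η⁻¹ l.succ := by
      rw [hρdef, mul_inv_rev, Equiv.Perm.mul_apply, adjSwap, Equiv.swap_inv,
        Equiv.swap_apply_left]
    have hinv2 : ρ⁻¹ l.succ = η⁻¹ l.castSucc := by
      rw [hρdef, mul_inv_rev, Equiv.Perm.mul_apply, adjSwap, Equiv.swap_inv,
        Equiv.swap_apply_right]
    have hlt : ρ⁻¹ l.castSucc < ρ⁻¹ l.succ := by rw [hinv1, hinv2]; exact hba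
    have := key l ρ hlt
    rw [hss] at this
    have hcard : invCount η = invCount ρ + 1 := by
      unfold invCount
      rw [this, Finset.card_insert_of_notMem (key_notin l ρ)]
    omega
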